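/- Let E ∈ ℝ^{n×n} be symmetric positive definite and let y, z ∈ ℝⁿ satisfy the curvature condition yᵀz > 0. Set ρ = 1/(yᵀz) and define E⁺ = (I − ρ z yᵀ) E (I − ρ y zᵀ) + ρ z zᵀ. Then E⁺ is symmetric positive definite. -/

import Mathlib

open Matrix

lemma vmv_mulVec {n : ℕ} (y z x : Fin n → ℝ) : vecMulVec z y *ᵥ x = (y ⬝ᵥ x) • z := by
  ext i
  simp only [mulVec, vecMulVec_apply, dotProduct, Pi.smul_apply, smul_eq_mul,
    Finset.sum_mul]
  exact Finset.sum_congr rfl (fun j _ => by ring)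

lemma vmv_transpose {n : ℕ} (y z : Fin n → ℝ) : (vecMulVec z y)ᵀ = vecMulVec y z := by
  ext i j; simp [vecMulVec_apply, mul_comm]

noncomputable def bfgsUpdate {n : ℕ} (E : Matrix (Fin n) (Fin n) ℝ)
    (y z : Fin n → ℝ) : Matrix (Fin n) (Fin n) ℝ :=
  (1 - (y ⬝ᵥ z)⁻¹ • vecMulVec z y) * E * (1 - (y ⬝ᵥ z)⁻¹ • vecMulVec y z)
    + (y ⬝ᵥ z)⁻¹ • vecMulVec z z

theorem stmt6 {n : ℕ} (E : Matrix (Fin n) (Fin n) ℝ) (hE : E.PosDef)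
    (y z : Fin n → ℝ) (hyz : 0 < y ⬝ᵥ z) :
    (bfgsUpdate E y z).PosDef := by
  set ρ : ℝ := (y ⬝ᵥ z)⁻¹ with hρ
  have hρpos : 0 < ρ := inv_pos.mpr hyz
  set A : Matrix (Fin n) (Fin n) ℝ := 1 - ρ • vecMulVec y z with hA
  have hAT : Aᵀ = 1 - ρ • vecMulVec z y := by
    rw [hA, transpose_sub, transpose_smul, vmv_transpose, transpose_one]
  have hET : Eᵀ = E := hE.1
  have hupd : bfgsUpdate E y z = Aᵀ * E * A + ρ • vecMulVec z z := by
    rw [bfgsUpdate, hAT]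
  rw [posDef_iff_dotProduct_mulVec]
  constructor
  · -- Hermitian
    show (bfgsUpdate E y z)ᵀ = _
    rw [hupd, transpose_add, transpose_mul, transpose_mul, transpose_transpose,
      transpose_smul, vmv_transpose, hET, mul_assoc]
  · intro x hx
    have key : star x ⬝ᵥ (bfgsUpdate E y z *ᵥ x)
        = (A *ᵥ x) ⬝ᵥ E *ᵥ (A *ᵥ x) + ρ * (z ⬝ᵥ x) ^ 2 := by
      rw [hupd, add_mulVec, dotProduct_add, star_trivial, Matrix.mul_assoc,
        ← mulVec_mulVec, dotProduct_mulVec, ← transpose_transpose A,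
        vecMul_transpose, transpose_transpose, ← mulVec_mulVec,
        smul_mulVec, vmv_mulVec, dotProduct_smul, dotProduct_smul,
        smul_eq_mul, smul_eq_mul, dotProduct_comm x z]
      ring
    rw [star_trivial] at *
    rw [key]
    rcases eq_or_ne (z ⬝ᵥ x) 0 with h0 | h0
    · have hAx : A *ᵥ x = x := by
        rw [hA, sub_mulVec, one_mulVec, smul_mulVec, vmv_mulVec, h0]
        simp
      rw [hAx, h0]
      simpa using hE.dotProduct_mulVec_pos hx
    · have h1 : 0 ≤ (A *ᵥ x) ⬝ᵥ E *ᵥ (A *ᵥ x) := by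
        rcases eq_or_ne (A *ᵥ x) 0 with hw | hw
        · simp [hw]
        · exact le_of_lt (by simpa using hE.dotProduct_mulVec_pos hw)
      have h2 : 0 < ρ * (z ⬝ᵥ x) ^ 2 :=
        mul_pos hρpos (by positivity)
      linarith
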